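/- Let G be a connected graph on n vertices and α ∈ [0,1]. Then for every k with 1 ≤ k ≤ n, λ_k(RD(G)) ≤ λ_k(RD_α(G)) ≤ RTr_k, where RTr_k is the k-th largest reciprocal transmission among the vertices of G. -/

import Mathlib

open Matrix BigOperators Finset

/-- The reciprocal distance (Harary) matrix of a graph. -/
noncomputable def RDmat {V : Type*} [Fintype V] [DecidableEq V] (G : SimpleGraph V) :
    Matrix V V ℝ :=
  Matrix.of fun i j => if i = j then 0 else (1 : ℝ) / (G.dist i j)

/-- The reciprocal transmission of a vertex. -/
noncomputable def RTr {V : Type*} [Fintype V] [DecidableEq V] (G : SimpleGraph V) (v : V) : ℝ :=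
  ∑ u ∈ Finset.univ.erase v, (1 : ℝ) / (G.dist u v)

/-- The generalized reciprocal distance matrix `RD_α(G) = α RT(G) + (1-α) RD(G)`. -/
noncomputable def RDalpha {V : Type*} [Fintype V] [DecidableEq V] (G : SimpleGraph V) (α : ℝ) :
    Matrix V V ℝ :=
  α • Matrix.diagonal (RTr G) + (1 - α) • RDmat G

/-- The `i`-th largest eigenvalue (1-indexed, with multiplicity) of a real matrix,
obtained from the roots of its characteristic polynomial sorted decreasingly. -/
noncomputable def eigDesc {V : Type*} [Fintype V] [DecidableEq V] (M : Matrix V V ℝ) (i : ℕ) : ℝ :=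
  ((M.charpoly.roots.sort (· ≤ ·)).reverse).getD (i - 1) 0

/-- The spectral radius (largest eigenvalue) of a real symmetric matrix. -/
noncomputable def specRadius {V : Type*} [Fintype V] [DecidableEq V] (M : Matrix V V ℝ) : ℝ :=
  eigDesc M 1

/-- The join of two graphs. -/
def gjoin {V₁ V₂ : Type*} (G₁ : SimpleGraph V₁) (G₂ : SimpleGraph V₂) :
    SimpleGraph (V₁ ⊕ V₂) where
  Adj x y := match x, y with
    | Sum.inl a, Sum.inl b => G₁.Adj a b
    | Sum.inr a, Sum.inr b => G₂.Adj a b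
    | Sum.inl _, Sum.inr _ => True
    | Sum.inr _, Sum.inl _ => True
  symm := ⟨by rintro (a|a) (b|b) h <;> first | exact G₁.adj_symm h | exact G₂.adj_symm h | trivial⟩
  loopless := ⟨by rintro (a|a) h <;> first | exact G₁.irrefl h | exact G₂.irrefl h | exact G₁.loopless.irrefl a h | exact G₂.loopless.irrefl a h⟩

section Aux
set_option linter.unusedSectionVars false
set_option linter.unusedVariables false
open Matrix Polynomial Finset Module

variable {V : Type*} [Fintype V] [DecidableEq V]

lemma my_charmatrix_eq (A : Matrix V V ℝ) :
    charmatrix A = Matrix.diagonal (fun _ => (X : ℝ[X])) - (C : ℝ →+* ℝ[X]).mapMatrix A := by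
  ext i j
  simp [charmatrix_apply, Matrix.sub_apply]

lemma my_mapC_mul (A B : Matrix V V ℝ) :
    (C : ℝ →+* ℝ[X]).mapMatrix (A * B) =
      (C : ℝ →+* ℝ[X]).mapMatrix A * (C : ℝ →+* ℝ[X]).mapMatrix B :=
  _root_.map_mul _ A B

lemma my_charmatrix_diagonal (d : V → ℝ) :
    charmatrix (Matrix.diagonal d) = Matrix.diagonal (fun i => (X : ℝ[X]) - C (d i)) := by
  ext i j
  by_cases h : i = j
  · subst h; simp [charmatrix_apply_eq]
  · rw [charmatrix_apply_ne _ _ _ h]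
    simp [Matrix.diagonal_apply_ne _ h]

lemma my_charpoly_diagonal (d : V → ℝ) :
    (Matrix.diagonal d).charpoly = ∏ i, ((X : ℝ[X]) - C (d i)) := by
  rw [Matrix.charpoly, my_charmatrix_diagonal, Matrix.det_diagonal]

lemma my_charpoly_conj (U W A : Matrix V V ℝ) (h1 : U * W = 1) (h2 : W * U = 1) :
    (U * A * W).charpoly = A.charpoly := by
  have hUW : (C : ℝ →+* ℝ[X]).mapMatrix U * (C : ℝ →+* ℝ[X]).mapMatrix W = 1 := by
    rw [← my_mapC_mul, h1, _root_.map_one]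
  have key : charmatrix (U * A * W) =
      (C : ℝ →+* ℝ[X]).mapMatrix U * charmatrix A * (C : ℝ →+* ℝ[X]).mapMatrix W := by
    rw [my_charmatrix_eq, my_charmatrix_eq]
    have hdiag : Matrix.diagonal (fun _ => (X : ℝ[X])) = (X : ℝ[X]) • (1 : Matrix V V ℝ[X]) := by
      ext i j; by_cases h : i = j <;> simp [h]
    rw [Matrix.mul_sub, Matrix.sub_mul, hdiag]
    congr 1
    · rw [mul_smul_comm, mul_one, smul_mul_assoc, hUW]
    · rw [my_mapC_mul, my_mapC_mul]
  rw [Matrix.charpoly, Matrix.charpoly, key, Matrix.det_mul, Matrix.det_mul]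
  have h3 : ((C : ℝ →+* ℝ[X]).mapMatrix U).det * ((C : ℝ →+* ℝ[X]).mapMatrix W).det = 1 := by
    rw [← Matrix.det_mul, hUW, Matrix.det_one]
  rw [mul_right_comm, h3, one_mul]

lemma my_charpoly_hermitian (A : Matrix V V ℝ) (hA : A.IsHermitian) :
    A.charpoly = ∏ i, ((X : ℝ[X]) - C (hA.eigenvalues i)) := by
  conv_lhs => rw [hA.spectral_theorem]
  rw [Unitary.conjStarAlgAut_apply]
  rw [my_charpoly_conj _ _ _ (mem_unitaryGroup_iff.mp (hA.eigenvectorUnitary).2)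
    (mem_unitaryGroup_iff'.mp (hA.eigenvectorUnitary).2)]
  have : (RCLike.ofReal ∘ hA.eigenvalues : V → ℝ) = hA.eigenvalues := by
    funext i; simp [RCLike.ofReal]
  rw [this, my_charpoly_diagonal]

lemma my_roots_charpoly (A : Matrix V V ℝ) (hA : A.IsHermitian) :
    A.charpoly.roots = univ.val.map hA.eigenvalues := by
  rw [my_charpoly_hermitian A hA]
  have h := Polynomial.roots_multiset_prod_X_sub_C (univ.val.map hA.eigenvalues)
  rw [Multiset.map_map] at h
  rw [← h]
  congr 1

lemma my_roots_charpoly_diagonal (d : V → ℝ) :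
    (Matrix.diagonal d).charpoly.roots = univ.val.map d := by
  rw [my_charpoly_diagonal]
  have h := Polynomial.roots_multiset_prod_X_sub_C (univ.val.map d)
  rw [Multiset.map_map] at h
  rw [← h]
  congr 1


lemma my_le_countP {α : Type*} (l : List α) (p : α → Bool) (k : ℕ) (hk : k ≤ l.length)
    (h : ∀ i (hik : i < k), p (l[i]'(lt_of_lt_of_le hik hk)) = true) : k ≤ l.countP p := by
  rw [List.countP_eq_length_filter]
  have h1 : (l.take k).filter p = l.take k := by
    rw [List.filter_eq_self]
    intro a ha
    obtain ⟨i, hi, rfl⟩ := List.mem_iff_getElem.mp ha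
    have hik : i < k := by
      have := hi; rw [List.length_take] at this; omega
    rw [List.getElem_take]
    exact h i hik
  calc k = (l.take k).length := by rw [List.length_take]; omega
    _ = ((l.take k).filter p).length := by rw [h1]
    _ ≤ _ := ((List.take_sublist k l).filter p).length_le

lemma my_le_countP_drop {α : Type*} (l : List α) (p : α → Bool) (j : ℕ)
    (h : ∀ i (hji : j ≤ i) (hil : i < l.length), p (l[i]'hil) = true) :
    l.length - j ≤ l.countP p := by
  rw [List.countP_eq_length_filter]
  have h1 : (l.drop j).filter p = l.drop j := by
    rw [List.filter_eq_self]
    intro a ha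
    obtain ⟨i, hi, rfl⟩ := List.mem_iff_getElem.mp ha
    rw [List.getElem_drop]
    have hil : j + i < l.length := by
      have := hi; rw [List.length_drop] at this; omega
    exact h (j + i) (by omega) hil
  calc l.length - j = (l.drop j).length := by rw [List.length_drop]
    _ = ((l.drop j).filter p).length := by rw [h1]
    _ ≤ _ := ((List.drop_sublist j l).filter p).length_le

variable (m : Multiset ℝ)

lemma my_sorted_rev : List.Pairwise (fun a b => b ≤ a) ((m.sort (· ≤ ·)).reverse) := by
  rw [List.pairwise_reverse]
  exact m.pairwise_sort (· ≤ ·)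

lemma my_rev_length : ((m.sort (· ≤ ·)).reverse).length = Multiset.card m := by
  rw [List.length_reverse, Multiset.length_sort]

lemma my_rev_coe : ((((m.sort (· ≤ ·)).reverse) : List ℝ) : Multiset ℝ) = m := by
  rw [← Multiset.coe_reverse, List.reverse_reverse, Multiset.sort_eq]

lemma my_sorted_anti {i j : ℕ} (hij : i ≤ j) (hj : j < ((m.sort (· ≤ ·)).reverse).length) :
    ((m.sort (· ≤ ·)).reverse)[j]'hj ≤ ((m.sort (· ≤ ·)).reverse)[i]'(lt_of_le_of_lt hij hj) := by
  rcases lt_or_eq_of_le hij with h | h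
  · exact (my_sorted_rev m).rel_get_of_lt (a := ⟨i, lt_of_le_of_lt hij hj⟩) (b := ⟨j, hj⟩) h
  · subst h; exact le_refl _

lemma my_countP_ge {j : ℕ} (hj : j < Multiset.card m) :
    j + 1 ≤ Multiset.countP (fun x => ((m.sort (· ≤ ·)).reverse).getD j 0 ≤ x) m := by
  classical
  have hjl : j < ((m.sort (· ≤ ·)).reverse).length := by rw [my_rev_length]; exact hj
  set c := ((m.sort (· ≤ ·)).reverse).getD j 0 with hc
  have hgd : c = ((m.sort (· ≤ ·)).reverse)[j]'hjl :=
    List.getD_eq_getElem _ 0 hjl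
  conv_rhs => rw [show m = ((((m.sort (· ≤ ·)).reverse) : List ℝ) : Multiset ℝ) from (my_rev_coe m).symm]
  rw [Multiset.coe_countP]
  apply my_le_countP _ _ _ (by omega)
  intro i hik
  rw [decide_eq_true_eq, hgd]
  exact my_sorted_anti m (by omega) hjl

lemma my_countP_le {j : ℕ} (hj : j < Multiset.card m) :
    Multiset.card m - j ≤
      Multiset.countP (fun x => x ≤ ((m.sort (· ≤ ·)).reverse).getD j 0) m := by
  classical
  have hjl : j < ((m.sort (· ≤ ·)).reverse).length := by rw [my_rev_length]; exact hj
  set c := ((m.sort (· ≤ ·)).reverse).getD j 0 with hc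
  have hgd : c = ((m.sort (· ≤ ·)).reverse)[j]'hjl :=
    List.getD_eq_getElem _ 0 hjl
  conv_rhs => rw [show m = ((((m.sort (· ≤ ·)).reverse) : List ℝ) : Multiset ℝ) from (my_rev_coe m).symm]
  rw [Multiset.coe_countP]
  have := my_le_countP_drop ((m.sort (· ≤ ·)).reverse) (fun x => decide (x ≤ c)) j ?_
  · rw [my_rev_length] at this; exact this
  · intro i hji hil
    rw [decide_eq_true_eq, hgd]
    exact my_sorted_anti m hji hil


variable {V : Type*} [Fintype V] [DecidableEq V]

local notation "⟪" x ", " y "⟫" => @inner ℝ _ _ x y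

lemma my_toEuclideanLin_basis {A : Matrix V V ℝ} (hA : A.IsHermitian) (i : V) :
    toEuclideanLin A (hA.eigenvectorBasis i) = hA.eigenvalues i • hA.eigenvectorBasis i := by
  apply (WithLp.equiv 2 (V → ℝ)).injective
  ext j
  have h := congrFun (hA.mulVec_eigenvectorBasis i) j
  simpa [toEuclideanLin_apply] using h

lemma my_repr_toEuclideanLin {A : Matrix V V ℝ} (hA : A.IsHermitian)
    (x : EuclideanSpace ℝ V) (i : V) :
    hA.eigenvectorBasis.repr (toEuclideanLin A x) i =
      hA.eigenvalues i * hA.eigenvectorBasis.repr x i := by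
  rw [OrthonormalBasis.repr_apply_apply, OrthonormalBasis.repr_apply_apply]
  have hsym : LinearMap.IsSymmetric (toEuclideanLin A) := (isHermitian_iff_isSymmetric.1 hA)
  rw [← hsym (hA.eigenvectorBasis i) x, my_toEuclideanLin_basis hA i, inner_smul_left]
  simp

lemma my_inner_eq_sum (x y : EuclideanSpace ℝ V) (b : OrthonormalBasis V ℝ (EuclideanSpace ℝ V)) :
    ⟪x, y⟫ = ∑ i, b.repr x i * b.repr y i := by
  rw [← b.repr.inner_map_map x y]
  rw [PiLp.inner_apply]
  simp [RCLike.inner_apply, mul_comm]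

lemma my_norm_sq_eq_sum (x : EuclideanSpace ℝ V) (b : OrthonormalBasis V ℝ (EuclideanSpace ℝ V)) :
    ‖x‖ ^ 2 = ∑ i, (b.repr x i) ^ 2 := by
  rw [← real_inner_self_eq_norm_sq, my_inner_eq_sum x x b]
  congr 1; funext i; ring

lemma my_repr_zero_of_span (b : OrthonormalBasis V ℝ (EuclideanSpace ℝ V)) (s : Finset V)
    (x : EuclideanSpace ℝ V) (hx : x ∈ Submodule.span ℝ (b '' ↑s)) {i : V} (hi : i ∉ s) :
    b.repr x i = 0 := by
  induction hx using Submodule.span_induction with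
  | mem y hy =>
    obtain ⟨j, hj, rfl⟩ := hy
    rw [OrthonormalBasis.repr_apply_apply]
    exact b.orthonormal.2 (fun h : i = j => hi (h ▸ hj))
  | zero => simp
  | add y z _ _ hy hz => rw [map_add]; simp [Pi.add_apply, hy, hz]
  | smul c y _ hy => rw [_root_.map_smul]; simp [hy]

lemma my_rayleigh_le {A : Matrix V V ℝ} (hA : A.IsHermitian) (s : Finset V) (μ : ℝ)
    (h : ∀ i ∈ s, μ ≤ hA.eigenvalues i) (x : EuclideanSpace ℝ V)
    (hx : x ∈ Submodule.span ℝ (hA.eigenvectorBasis '' ↑s)) :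
    μ * ‖x‖ ^ 2 ≤ ⟪x, toEuclideanLin A x⟫ := by
  rw [my_inner_eq_sum x _ hA.eigenvectorBasis, my_norm_sq_eq_sum x hA.eigenvectorBasis,
    Finset.mul_sum]
  apply Finset.sum_le_sum
  intro i _
  rw [my_repr_toEuclideanLin hA x i]
  by_cases hi : i ∈ s
  · have := h i hi
    nlinarith [sq_nonneg (hA.eigenvectorBasis.repr x i)]
  · rw [my_repr_zero_of_span _ s x hx hi]; simp

lemma my_rayleigh_ge {A : Matrix V V ℝ} (hA : A.IsHermitian) (s : Finset V) (μ : ℝ)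
    (h : ∀ i ∈ s, hA.eigenvalues i ≤ μ) (x : EuclideanSpace ℝ V)
    (hx : x ∈ Submodule.span ℝ (hA.eigenvectorBasis '' ↑s)) :
    ⟪x, toEuclideanLin A x⟫ ≤ μ * ‖x‖ ^ 2 := by
  rw [my_inner_eq_sum x _ hA.eigenvectorBasis, my_norm_sq_eq_sum x hA.eigenvectorBasis,
    Finset.mul_sum]
  apply Finset.sum_le_sum
  intro i _
  rw [my_repr_toEuclideanLin hA x i]
  by_cases hi : i ∈ s
  · have := h i hi
    nlinarith [sq_nonneg (hA.eigenvectorBasis.repr x i)]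
  · rw [my_repr_zero_of_span _ s x hx hi]; simp

lemma my_inner_mono {A M : Matrix V V ℝ} (h : (M - A).PosSemidef) (x : EuclideanSpace ℝ V) :
    ⟪x, toEuclideanLin A x⟫ ≤ ⟪x, toEuclideanLin M x⟫ := by
  have h2 := h.dotProduct_mulVec_nonneg ((WithLp.equiv 2 (V → ℝ)) x)
  rw [sub_mulVec] at h2
  have hd : ∀ B : Matrix V V ℝ, ⟪x, toEuclideanLin B x⟫ =
      dotProduct (star ((WithLp.equiv 2 (V → ℝ)) x)) (B *ᵥ ((WithLp.equiv 2 (V → ℝ)) x)) := by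
    intro B
    rw [toEuclideanLin_apply, EuclideanSpace.inner_eq_star_dotProduct]
    simp [dotProduct_comm]
  rw [hd, hd]
  rw [dotProduct_sub] at h2
  simp only [star_trivial] at *
  linarith

lemma my_finrank_span (b : OrthonormalBasis V ℝ (EuclideanSpace ℝ V)) (s : Finset V) :
    finrank ℝ (Submodule.span ℝ (b '' ↑s)) = s.card := by
  have li : LinearIndependent ℝ (fun i : {x // x ∈ s} => b ↑i) :=
    b.orthonormal.linearIndependent.comp _ Subtype.val_injective
  have h := finrank_span_eq_card li
  rw [show (Set.range fun i : {x // x ∈ s} => b ↑i) = b '' ↑s from (Set.image_eq_range _ _).symm] at h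
  rw [h, Fintype.card_coe]

lemma my_exists_ne_zero_mem_inf {U W : Submodule ℝ (EuclideanSpace ℝ V)}
    (h : finrank ℝ (EuclideanSpace ℝ V) < finrank ℝ U + finrank ℝ W) :
    ∃ x : EuclideanSpace ℝ V, x ≠ 0 ∧ x ∈ U ⊓ W := by
  have h1 := Submodule.finrank_sup_add_finrank_inf_eq U W
  have h2 : finrank ℝ ↥(U ⊔ W) ≤ finrank ℝ (EuclideanSpace ℝ V) := Submodule.finrank_le _
  have h3 : 0 < finrank ℝ ↥(U ⊓ W) := by omega
  obtain ⟨⟨x, hx⟩, hx0⟩ := finrank_pos_iff_exists_ne_zero.mp h3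
  refine ⟨x, ?_, hx⟩
  intro hx'
  exact hx0 (by simp [hx'])

lemma my_weyl {V : Type*} [Fintype V] [DecidableEq V] {A M : Matrix V V ℝ}
    (hA : A.IsHermitian) (hM : M.IsHermitian) (hC : (M - A).PosSemidef)
    {k : ℕ} (hk1 : 1 ≤ k) (hkn : k ≤ Fintype.card V) :
    eigDesc A k ≤ eigDesc M k := by
  classical
  set n := Fintype.card V with hn
  set j := k - 1 with hjdef
  have hjn : j < n := by omega
  unfold eigDesc
  rw [my_roots_charpoly A hA, my_roots_charpoly M hM]
  set mA : Multiset ℝ := Finset.univ.val.map hA.eigenvalues with hmA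
  set mM : Multiset ℝ := Finset.univ.val.map hM.eigenvalues with hmM
  have hcardA : Multiset.card mA = n := by simp [hmA, hn]
  have hcardM : Multiset.card mM = n := by simp [hmM, hn]
  set cA : ℝ := ((mA.sort (· ≤ ·)).reverse).getD j 0 with hcA
  set cM : ℝ := ((mM.sort (· ≤ ·)).reverse).getD j 0 with hcM
  -- finsets
  set sA : Finset V := Finset.univ.filter (fun i => cA ≤ hA.eigenvalues i) with hsA
  set sM : Finset V := Finset.univ.filter (fun i => hM.eigenvalues i ≤ cM) with hsM
  have hcardsA : j + 1 ≤ sA.card := by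
    have h := my_countP_ge mA (j := j) (by omega)
    rw [hmA, Multiset.countP_map] at h
    rw [← hmA, ← hcA] at h
    have he : sA.card = Multiset.card (Multiset.filter (fun a => cA ≤ hA.eigenvalues a)
        Finset.univ.val) := by
      rw [hsA, Finset.card_def, Finset.filter_val]
    rw [he]
    exact h
  have hcardsM : n - j ≤ sM.card := by
    have h := my_countP_le mM (j := j) (by omega)
    rw [hmM, Multiset.countP_map] at h
    rw [← hmM, ← hcM, hcardM] at h
    have he : sM.card = Multiset.card (Multiset.filter (fun a => hM.eigenvalues a ≤ cM)
        Finset.univ.val) := by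
      rw [hsM, Finset.card_def, Finset.filter_val]
    rw [he]
    exact h
  set U := Submodule.span ℝ (hA.eigenvectorBasis '' ↑sA) with hU
  set W := Submodule.span ℝ (hM.eigenvectorBasis '' ↑sM) with hW
  have hdim : Module.finrank ℝ (EuclideanSpace ℝ V) < Module.finrank ℝ U + Module.finrank ℝ W := by
    rw [hU, hW, my_finrank_span, my_finrank_span, finrank_euclideanSpace]
    omega
  obtain ⟨x, hx0, hxU, hxW⟩ := my_exists_ne_zero_mem_inf hdim
  have h1 : cA * ‖x‖ ^ 2 ≤ @inner ℝ _ _ x (Matrix.toEuclideanLin A x) :=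
    my_rayleigh_le hA sA cA (fun i hi => (Finset.mem_filter.mp hi).2) x hxU
  have h2 : @inner ℝ _ _ x (Matrix.toEuclideanLin A x) ≤ @inner ℝ _ _ x (Matrix.toEuclideanLin M x) :=
    my_inner_mono hC x
  have h3 : @inner ℝ _ _ x (Matrix.toEuclideanLin M x) ≤ cM * ‖x‖ ^ 2 :=
    my_rayleigh_ge hM sM cM (fun i hi => (Finset.mem_filter.mp hi).2) x hxW
  have hxn : 0 < ‖x‖ ^ 2 := pow_pos (norm_pos_iff.mpr hx0) 2
  have : cA * ‖x‖ ^ 2 ≤ cM * ‖x‖ ^ 2 := by linarith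
  exact le_of_mul_le_mul_right (by linarith [this]) hxn

section GraphPart
open Polynomial Module

variable {V : Type*} [Fintype V] [DecidableEq V] (G : SimpleGraph V)

lemma my_RD_symm (i j : V) : RDmat G i j = RDmat G j i := by
  unfold RDmat
  by_cases h : i = j
  · subst h; simp
  · simp only [Matrix.of_apply, if_neg h, if_neg (Ne.symm h)]
    rw [SimpleGraph.dist_comm]

lemma my_RD_herm : (RDmat G).IsHermitian := by
  unfold Matrix.IsHermitian
  ext i j
  rw [Matrix.conjTranspose_apply, star_trivial]
  exact my_RD_symm G j i

lemma my_RD_nonneg (i j : V) : 0 ≤ RDmat G i j := by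
  unfold RDmat
  by_cases h : i = j
  · simp [h]
  · simp only [Matrix.of_apply, if_neg h]
    positivity

lemma my_RTr_eq_sum (i : V) : RTr G i = ∑ j, RDmat G i j := by
  unfold RTr
  rw [← Finset.sum_erase Finset.univ (show RDmat G i i = 0 by simp [RDmat])]
  apply Finset.sum_congr rfl
  intro u hu
  have h : i ≠ u := fun h => (Finset.mem_erase.mp hu).1 h.symm
  simp only [RDmat, Matrix.of_apply, if_neg h]
  rw [SimpleGraph.dist_comm]

lemma my_expand_quad (x : V → ℝ) (M : Matrix V V ℝ) :
    dotProduct x (M *ᵥ x) = ∑ i, ∑ j, M i j * x i * x j := by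
  simp only [dotProduct, Matrix.mulVec, dotProduct]
  apply Finset.sum_congr rfl
  intro i _
  rw [Finset.mul_sum]
  apply Finset.sum_congr rfl
  intro j _
  ring

lemma my_lap_psd : (Matrix.diagonal (RTr G) - RDmat G).PosSemidef := by
  rw [Matrix.posSemidef_iff_dotProduct_mulVec]
  constructor
  · exact (Matrix.isHermitian_diagonal _).sub (my_RD_herm G)
  · intro x
    simp only [star_trivial]
    have hq : dotProduct x ((Matrix.diagonal (RTr G) - RDmat G) *ᵥ x) =
        ∑ i, ∑ j, RDmat G i j * (x i ^ 2 - x i * x j) := by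
      rw [Matrix.sub_mulVec, dotProduct_sub, my_expand_quad, my_expand_quad]
      have h1 : ∑ i, ∑ j, Matrix.diagonal (RTr G) i j * x i * x j =
          ∑ i, ∑ j, RDmat G i j * x i ^ 2 := by
        apply Finset.sum_congr rfl
        intro i _
        rw [Finset.sum_eq_single_of_mem i (Finset.mem_univ i)]
        · rw [Matrix.diagonal_apply_eq, my_RTr_eq_sum, Finset.sum_mul, Finset.sum_mul]
          apply Finset.sum_congr rfl
          intro j _; ring
        · intro j _ hji
          rw [Matrix.diagonal_apply_ne _ (Ne.symm hji)]; ring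
      rw [h1, ← Finset.sum_sub_distrib]
      apply Finset.sum_congr rfl
      intro i _
      rw [← Finset.sum_sub_distrib]
      apply Finset.sum_congr rfl
      intro j _; ring
    rw [hq]
    have hswap : ∑ i, ∑ j, RDmat G i j * (x i ^ 2 - x i * x j) =
        ∑ i, ∑ j, RDmat G i j * (x j ^ 2 - x j * x i) := by
      rw [Finset.sum_comm]
      apply Finset.sum_congr rfl
      intro i _
      apply Finset.sum_congr rfl
      intro j _
      rw [my_RD_symm]
    have hkey : (∑ i, ∑ j, RDmat G i j * (x i ^ 2 - x i * x j)) +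
        (∑ i, ∑ j, RDmat G i j * (x j ^ 2 - x j * x i)) =
        ∑ i, ∑ j, RDmat G i j * (x i - x j) ^ 2 := by
      rw [← Finset.sum_add_distrib]
      apply Finset.sum_congr rfl
      intro i _
      rw [← Finset.sum_add_distrib]
      apply Finset.sum_congr rfl
      intro j _; ring
    have hpos : 0 ≤ ∑ i, ∑ j, RDmat G i j * (x i - x j) ^ 2 := by
      apply Finset.sum_nonneg
      intro i _
      apply Finset.sum_nonneg
      intro j _
      exact mul_nonneg (my_RD_nonneg G i j) (sq_nonneg _)
    linarith

lemma my_psd_smul {B : Matrix V V ℝ} (hB : B.PosSemidef) {c : ℝ} (hc : 0 ≤ c) :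
    (c • B).PosSemidef := by
  rw [Matrix.posSemidef_iff_dotProduct_mulVec]
  constructor
  · unfold Matrix.IsHermitian
    rw [Matrix.conjTranspose_smul, hB.1, star_trivial]
  · intro x
    have h := hB.dotProduct_mulVec_nonneg x
    rw [Matrix.smul_mulVec, dotProduct_smul, smul_eq_mul]
    exact mul_nonneg hc h

lemma my_RDalpha_herm (α : ℝ) : (RDalpha G α).IsHermitian := by
  unfold RDalpha Matrix.IsHermitian
  rw [Matrix.conjTranspose_add, Matrix.conjTranspose_smul, Matrix.conjTranspose_smul,
    (my_RD_herm G : _ = _), ((Matrix.isHermitian_diagonal (RTr G)) : _ = _),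
    star_trivial, star_trivial]

end GraphPart

end Aux

/-- Corollary 3.6: `λ_k(RD(G)) ≤ λ_k(RD_α(G)) ≤ RTr_k`, where `RTr_k` is the `k`-th largest
reciprocal transmission of `G`. -/
theorem stmt9 {V : Type*} [Fintype V] [DecidableEq V] (G : SimpleGraph V) (hG : G.Connected)
    (α : ℝ) (hα : α ∈ Set.Icc (0 : ℝ) 1)
    (k : ℕ) (hk1 : 1 ≤ k) (hkn : k ≤ Fintype.card V) :
    eigDesc (RDmat G) k ≤ eigDesc (RDalpha G α) k ∧
    eigDesc (RDalpha G α) k ≤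
      (((Finset.univ.val.map (RTr G)).sort (· ≤ ·)).reverse).getD (k - 1) 0 := by
  obtain ⟨hα0, hα1⟩ := hα
  have hMA : RDalpha G α - RDmat G = α • (Matrix.diagonal (RTr G) - RDmat G) := by
    unfold RDalpha; module
  have hDM : Matrix.diagonal (RTr G) - RDalpha G α =
      (1 - α) • (Matrix.diagonal (RTr G) - RDmat G) := by
    unfold RDalpha; module
  constructor
  · exact my_weyl (my_RD_herm G) (my_RDalpha_herm G α)
      (hMA ▸ my_psd_smul (my_lap_psd G) hα0) hk1 hkn
  · have h2 := my_weyl (my_RDalpha_herm G α) (Matrix.isHermitian_diagonal (RTr G))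
      (hDM ▸ my_psd_smul (my_lap_psd G) (by linarith : (0:ℝ) ≤ 1 - α)) hk1 hkn
    have h3 : eigDesc (Matrix.diagonal (RTr G)) k =
        (((Finset.univ.val.map (RTr G)).sort (· ≤ ·)).reverse).getD (k - 1) 0 := by
      unfold eigDesc
      rw [my_roots_charpoly_diagonal]
    rw [← h3]
    exact h2
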